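/- For qubit swap matrices on n ≥ 4 qubits and four distinct indices i, j, k, ℓ, the commutation relation [S_{ij}, S_{kℓ}] = 0 is implied by the relations S_{pq}² = I, S_{pq}S_{qr} = S_{pr}S_{pq}, and the anticommutator relation S_{pq}S_{qr} + S_{qr}S_{pq} = S_{pq} + S_{qr} + S_{pr} − I; that is, the commutator lies in the two-sided ideal generated by these relations in the free algebra. -/

import Mathlib

/-- The free `*`-algebra generator `s_{ij}`, indexed by the unordered pair `{i,j}`
(so that `s_{ij} = s_{ji}` holds by construction). -/
noncomputable def sgen (n : ℕ) (i j : Fin n) : FreeAlgebra ℂ (Sym2 (Fin n)) :=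
  FreeAlgebra.ι ℂ (Sym2.mk i j)

/-- The defining relations of the symbolic swap algebra, as elements of the free
algebra: for all distinct `i, j, k`,
(1) `s_{ij}² − 1`, (2) `s_{ij}s_{jk} − s_{ik}s_{ij}`, and
(3) `s_{ij}s_{jk} + s_{jk}s_{ij} − (s_{ij} + s_{jk} + s_{ik} − 1)`. -/
def swapRelationSet (n : ℕ) : Set (FreeAlgebra ℂ (Sym2 (Fin n))) :=
  { p | ∃ i j k : Fin n, i ≠ j ∧ j ≠ k ∧ i ≠ k ∧
      (p = sgen n i j * sgen n i j - 1 ∨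
       p = sgen n i j * sgen n j k - sgen n i k * sgen n i j ∨
       p = sgen n i j * sgen n j k + sgen n j k * sgen n i j -
            (sgen n i j + sgen n j k + sgen n i k - 1)) }

namespace SwapAux

lemma sgen_comm (n : ℕ) (i j : Fin n) : sgen n i j = sgen n j i := by
  unfold sgen
  rw [Sym2.eq_swap]

/-- `a ≈ b` mod the two-sided ideal generated by the swap relations. -/
def E (n : ℕ) (a b : FreeAlgebra ℂ (Sym2 (Fin n))) : Prop :=
  a - b ∈ TwoSidedIdeal.span (swapRelationSet n)

variable {n : ℕ}

lemma E.of_eq {a b c d : FreeAlgebra ℂ (Sym2 (Fin n))} (h : E n c d)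
    (he : a - b = c - d) : E n a b := by
  unfold E at h ⊢; rw [he]; exact h

lemma E.symm {a b : FreeAlgebra ℂ (Sym2 (Fin n))} (h : E n a b) : E n b a := by
  have := (TwoSidedIdeal.span (swapRelationSet n)).neg_mem h
  unfold E at *
  simpa using this

lemma E.trans {a b c : FreeAlgebra ℂ (Sym2 (Fin n))} (h1 : E n a b) (h2 : E n b c) :
    E n a c := by
  have := (TwoSidedIdeal.span (swapRelationSet n)).add_mem h1 h2
  unfold E at *
  simpa using this

lemma E.mul_left {a b : FreeAlgebra ℂ (Sym2 (Fin n))} (c : FreeAlgebra ℂ (Sym2 (Fin n)))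
    (h : E n a b) : E n (c * a) (c * b) := by
  have := (TwoSidedIdeal.span (swapRelationSet n)).mul_mem_left c _ h
  unfold E at *
  rwa [mul_sub] at this

lemma E.mul_right {a b : FreeAlgebra ℂ (Sym2 (Fin n))} (c : FreeAlgebra ℂ (Sym2 (Fin n)))
    (h : E n a b) : E n (a * c) (b * c) := by
  have := (TwoSidedIdeal.span (swapRelationSet n)).mul_mem_right _ c h
  unfold E at *
  rwa [sub_mul] at this

lemma rel1 {p q r : Fin n} (hpq : p ≠ q) (hqr : q ≠ r) (hpr : p ≠ r) :
    E n (sgen n p q * sgen n p q) 1 :=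
  TwoSidedIdeal.subset_span ⟨p, q, r, hpq, hqr, hpr, Or.inl rfl⟩

lemma rel2 {p q r : Fin n} (hpq : p ≠ q) (hqr : q ≠ r) (hpr : p ≠ r) :
    E n (sgen n p q * sgen n q r) (sgen n p r * sgen n p q) :=
  TwoSidedIdeal.subset_span ⟨p, q, r, hpq, hqr, hpr, Or.inr (Or.inl rfl)⟩

lemma rel3 {p q r : Fin n} (hpq : p ≠ q) (hqr : q ≠ r) (hpr : p ≠ r) :
    E n (sgen n p q * sgen n q r + sgen n q r * sgen n p q)
      (sgen n p q + sgen n q r + sgen n p r - 1) :=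
  TwoSidedIdeal.subset_span ⟨p, q, r, hpq, hqr, hpr, Or.inr (Or.inr rfl)⟩

end SwapAux

/-- For four distinct indices `i, j, k, ℓ` (with `n ≥ 4`), the commutator
`[s_{ij}, s_{kℓ}] = s_{ij}s_{kℓ} − s_{kℓ}s_{ij}` lies in the two-sided ideal of the
free algebra generated by the relations `s_{pq}² = 1`, `s_{pq}s_{qr} = s_{pr}s_{pq}`
and `s_{pq}s_{qr} + s_{qr}s_{pq} = s_{pq} + s_{qr} + s_{pr} − 1`; that is, the
commutation relation `[S_{ij}, S_{kℓ}] = 0` is implied by those relations. -/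
theorem commutator_mem_swapRelation_ideal (n : ℕ) (hn : 4 ≤ n) (i j k l : Fin n)
    (hij : i ≠ j) (hik : i ≠ k) (hil : i ≠ l) (hjk : j ≠ k) (hjl : j ≠ l)
    (hkl : k ≠ l) :
    sgen n i j * sgen n k l - sgen n k l * sgen n i j ∈
      TwoSidedIdeal.span (swapRelationSet n) := by
  open SwapAux in
  set a := sgen n i j with ha
  set x := sgen n i k with hx
  set y := sgen n j k with hy
  set z := sgen n k l with hz
  set u := sgen n i l with hu
  set v := sgen n j l with hv
  -- step 1 : a ≈ x*y + y*x - x - y + 1   (relation (3) for triple (i,k,j))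
  have h3a : E n (x * y + y * x) (x + y + a - 1) := by
    have := rel3 (n := n) (p := i) (q := k) (r := j) hik hjk.symm hij
    rwa [sgen_comm n k j, ← hx, ← hy, ← ha] at this
  have h1 : E n a (x * y + y * x - x - y + 1) :=
    h3a.symm.of_eq (by noncomm_ring)
  -- push rules from relation (2)
  have p1 : E n (z * x) (u * z) := by
    have := rel2 (n := n) (p := l) (q := k) (r := i) hkl.symm hik.symm hil.symm
    rwa [sgen_comm n l k, sgen_comm n k i, sgen_comm n l i, ← hz, ← hx, ← hu] at this
  have p2 : E n (z * y) (v * z) := by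
    have := rel2 (n := n) (p := l) (q := k) (r := j) hkl.symm hjk.symm hjl.symm
    rwa [sgen_comm n l k, sgen_comm n k j, sgen_comm n l j, ← hz, ← hy, ← hv] at this
  have hz2 : E n (z * z) 1 := rel1 hkl (Ne.symm hil) (Ne.symm hik)
  -- relation (3) for triple (i,l,j)
  have h3b : E n (u * v + v * u) (u + v + a - 1) := by
    have := rel3 (n := n) (p := i) (q := l) (r := j) hil hjl.symm hij
    rwa [sgen_comm n l j, ← hu, ← hv, ← ha] at this
  -- z * x * y * z ≈ u * v
  have t1 : E n (z * x * y * z) (u * v) := by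
    have s1 : E n (z * x * y * z) (u * z * y * z) := (p1.mul_right y).mul_right z
    have s2 : E n (u * z * y * z) (u * v * z * z) :=
      ((p2.mul_left u).of_eq (by noncomm_ring)).mul_right z
    have s3 : E n (u * v * z * z) (u * v) :=
      (hz2.mul_left (u * v)).of_eq (by noncomm_ring)
    exact (s1.trans s2).trans s3
  -- z * y * x * z ≈ v * u
  have t2 : E n (z * y * x * z) (v * u) := by
    have s1 : E n (z * y * x * z) (v * z * x * z) := (p2.mul_right x).mul_right z
    have s2 : E n (v * z * x * z) (v * u * z * z) :=
      ((p1.mul_left v).of_eq (by noncomm_ring)).mul_right z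
    have s3 : E n (v * u * z * z) (v * u) :=
      (hz2.mul_left (v * u)).of_eq (by noncomm_ring)
    exact (s1.trans s2).trans s3
  -- z * x * z ≈ u,  z * y * z ≈ v
  have t3 : E n (z * x * z) u := by
    have s1 : E n (z * x * z) (u * z * z) := p1.mul_right z
    exact s1.trans ((hz2.mul_left u).of_eq (by noncomm_ring))
  have t4 : E n (z * y * z) v := by
    have s1 : E n (z * y * z) (v * z * z) := p2.mul_right z
    exact s1.trans ((hz2.mul_left v).of_eq (by noncomm_ring))
  -- main conjugation : z * a * z ≈ a
  have hM : E n (z * a * z) a := by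
    have s1 : E n (z * a * z) (z * (x * y + y * x - x - y + 1) * z) :=
      (h1.mul_left z).mul_right z
    have s2 : E n (z * (x * y + y * x - x - y + 1) * z)
        (u * v + v * u - u - v + 1) := by
      -- combine: lhs = z*x*y*z + z*y*x*z - z*x*z - z*y*z + z*z
      have e1 : E n (z * x * y * z + z * y * x * z - z * x * z - z * y * z + z * z)
          (u * v + v * u - u - v + 1) := by
        unfold E at t1 t2 t3 t4 hz2 ⊢
        have := (TwoSidedIdeal.span (swapRelationSet n)).add_mem
          ((TwoSidedIdeal.span (swapRelationSet n)).add_mem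
            ((TwoSidedIdeal.span (swapRelationSet n)).sub_mem
              ((TwoSidedIdeal.span (swapRelationSet n)).sub_mem
                ((TwoSidedIdeal.span (swapRelationSet n)).add_mem t1 t2) t3) t4) hz2)
          ((TwoSidedIdeal.span (swapRelationSet n)).zero_mem)
        convert this using 1
        noncomm_ring
      exact e1.of_eq (by noncomm_ring)
    exact (s1.trans s2).trans (h3b.of_eq (by noncomm_ring))
  -- conclude : a * z ≈ z * a
  have f1 : E n (a * z) (z * z * (a * z)) :=
    (hz2.mul_right (a * z)).symm.of_eq (by noncomm_ring)
  have f2 : E n (z * z * (a * z)) (z * a) :=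
    (hM.mul_left z).of_eq (by noncomm_ring)
  exact (f1.trans f2)
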